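/- Let D be an open subset of a finite dimensional real normed space (V,‖·‖) and let f : D → V be nonexpansive. If the fixed point set Fix(f) = {x ∈ D : f(x) = x} is compact and nonempty, then Fix(f) is connected. -/

import Mathlib

open Metric Set

/-- A nonexpansive self-map of a nonempty compact convex subset of a real normed space
has a fixed point. -/
theorem aux_nonexpansive_fixed {V : Type*} [NormedAddCommGroup V] [NormedSpace ℝ V]
    {C : Set V} (hC : IsCompact C) (hconv : Convex ℝ C) (hne : C.Nonempty)
    {f : V → V} (hmap : Set.MapsTo f C C)
    (hlip : ∀ x ∈ C, ∀ y ∈ C, ‖f x - f y‖ ≤ ‖x - y‖) : ∃ z ∈ C, f z = z := by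
  obtain ⟨x0, hx0⟩ := hne
  obtain ⟨r, hr⟩ := (hC.isBounded.subset_closedBall x0)
  have hrpos : 0 ≤ r := by
    have := hr hx0
    rw [mem_closedBall, dist_self] at this
    exact this
  -- f is continuous on C
  have hfcont : ContinuousOn f C := by
    have : LipschitzOnWith 1 f C := by
      apply LipschitzOnWith.of_dist_le_mul
      intro x hx y hy
      rw [NNReal.coe_one, one_mul, dist_eq_norm, dist_eq_norm]
      exact hlip x hx y hy
    exact this.continuousOn
  -- minimize the displacement
  obtain ⟨z, hzC, hzmin'⟩ := hC.exists_isMinOn ⟨x0, hx0⟩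
    (continuous_dist.comp_continuousOn (continuousOn_id.prodMk hfcont))
  have hzmin : ∀ x ∈ C, dist z (f z) ≤ dist x (f x) := fun x hx => hzmin' hx
  refine ⟨z, hzC, ?_⟩
  by_contra hfz
  have hmpos : 0 < dist z (f z) := dist_pos.2 (fun h => hfz h.symm)
  obtain ⟨m, hm⟩ : ∃ m : ℝ, m = dist z (f z) := ⟨_, rfl⟩
  rw [← hm] at hmpos hzmin
  -- choose a contraction parameter s
  obtain ⟨s, hs0, hs1, hsb⟩ : ∃ s : ℝ, 0 ≤ s ∧ s < 1 ∧ (1 - s) * (r + 1) < m := by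
    refine ⟨1 - m / (m + 2 * (r + 1)), ?_, ?_, ?_⟩
    · rw [sub_nonneg, div_le_one (by linarith)]; linarith
    · rw [sub_lt_self_iff]; exact div_pos hmpos (by linarith)
    · rw [sub_sub_cancel, div_mul_eq_mul_div, div_lt_iff₀ (by linarith)]
      nlinarith
  -- the Krasnoselskii contraction
  set g : V → V := fun x => (1 - s) • x0 + s • f x with hg
  have hgC : Set.MapsTo g C C := fun x hx =>
    hconv hx0 (hmap hx) (by linarith) hs0 (by ring)
  set K : NNReal := ⟨s, hs0⟩ with hK
  have hcontr : ContractingWith K (hgC.restrict g C C) := by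
    constructor
    · rw [← NNReal.coe_lt_coe, NNReal.coe_one]; exact hs1
    · apply LipschitzWith.of_dist_le_mul
      intro x y
      rw [Subtype.dist_eq, Subtype.dist_eq]
      show dist (g x) (g y) ≤ K * dist (x : V) y
      have hgxy : g (x : V) - g (y : V) = s • (f (x : V) - f (y : V)) := by
        simp only [hg]; module
      rw [dist_eq_norm, hgxy, norm_smul, Real.norm_of_nonneg hs0, dist_eq_norm]
      have hxy := hlip x x.2 y y.2
      have : (K : ℝ) = s := rfl
      rw [this]
      nlinarith
  obtain ⟨w, hwC, hw, -, -⟩ :=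
    hcontr.exists_fixedPoint' hC.isComplete hgC hx0 (edist_ne_top _ _)
  -- the displacement of w is small
  have hwfw : dist w (f w) ≤ (1 - s) * (r + 1) := by
    have hgw : g w = w := hw
    have hid : w - f w = (1 - s) • (x0 - f w) := by
      nth_rewrite 1 [← hgw]
      show (1 - s) • x0 + s • f w - f w = (1 - s) • (x0 - f w)
      module
    rw [dist_eq_norm, hid, norm_smul, Real.norm_of_nonneg (by linarith)]
    have hfwC : f w ∈ C := hmap hwC
    have h1 : ‖x0 - f w‖ ≤ r := by
      have := hr hfwC
      rw [mem_closedBall, dist_eq_norm] at this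
      rw [norm_sub_rev]
      exact this
    nlinarith
  have := hzmin w hwC
  linarith

/-- If `f : D → V` is a nonexpansive map on an open subset `D` of a finite dimensional
real normed space and its fixed point set is compact and nonempty, then the fixed point
set is connected. -/
theorem stmt4 {V : Type*} [NormedAddCommGroup V] [NormedSpace ℝ V] [FiniteDimensional ℝ V]
    (D : Set V) (hD : IsOpen D) (f : V → V)
    (hf : ∀ x ∈ D, ∀ y ∈ D, ‖f x - f y‖ ≤ ‖x - y‖)
    (hcpt : IsCompact {x ∈ D | f x = x}) (hne : {x ∈ D | f x = x}.Nonempty) :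
    IsConnected {x ∈ D | f x = x} := by
  set S := {x ∈ D | f x = x} with hSdef
  have hSD : S ⊆ D := fun x hx => hx.1
  refine ⟨hne, ?_⟩
  rw [isPreconnected_iff_subset_of_fully_disjoint_closed hcpt.isClosed]
  intro u v hu hv hSuv huv
  by_contra hcon
  push_neg at hcon
  obtain ⟨hnu, hnv⟩ := hcon
  set A := S ∩ u with hA
  set B := S ∩ v with hB
  have hAcomp : IsCompact A := hcpt.inter_right hu
  have hBcomp : IsCompact B := hcpt.inter_right hv
  have hAne : A.Nonempty := by
    obtain ⟨x, hxS, hxv⟩ := Set.not_subset.1 hnv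
    exact ⟨x, hxS, (hSuv hxS).resolve_right hxv⟩
  have hBne : B.Nonempty := by
    obtain ⟨x, hxS, hxu⟩ := Set.not_subset.1 hnu
    exact ⟨x, hxS, (hSuv hxS).resolve_left hxu⟩
  -- closest pair (a, b)
  obtain ⟨⟨a, b⟩, habm, hmin'⟩ :=
    (hAcomp.prod hBcomp).exists_isMinOn (hAne.prod hBne)
      ((continuous_fst.dist continuous_snd).continuousOn)
  have hmin : ∀ p ∈ A ×ˢ B, dist a b ≤ dist p.1 p.2 := fun p hp => hmin' hp
  obtain ⟨haA, hbB⟩ := Set.mem_prod.1 habm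
  have haS : a ∈ S := haA.1
  have hbS : b ∈ S := hbB.1
  obtain ⟨d, hd⟩ : ∃ d : ℝ, d = dist a b := ⟨_, rfl⟩
  rw [← hd] at hmin
  have hdpos : 0 < d := by
    rw [hd, dist_pos]
    rintro rfl
    exact (Set.disjoint_left.1 huv haA.2) hbB.2
  -- a thickening of S inside D
  obtain ⟨ε, hεpos, hthick⟩ := hcpt.exists_thickening_subset_open hD hSD
  obtain ⟨δ, hδpos, hδε, hδd⟩ : ∃ δ : ℝ, 0 < δ ∧ δ < ε ∧ δ < d := by
    refine ⟨min (ε / 2) (d / 2), lt_min (by linarith) (by linarith), ?_, ?_⟩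
    · exact lt_of_le_of_lt (min_le_left _ _) (by linarith)
    · exact lt_of_le_of_lt (min_le_right _ _) (by linarith)
  have hballD : closedBall a δ ⊆ D := by
    intro z hz
    exact hthick (mem_thickening_iff.2
      ⟨a, haS, lt_of_le_of_lt (mem_closedBall.1 hz) hδε⟩)
  -- the lens
  set C := closedBall a δ ∩ closedBall b (d - δ) with hC
  have hCD : C ⊆ D := fun z hz => hballD hz.1
  have hCcomp : IsCompact C :=
    (isCompact_closedBall a δ).inter_right Metric.isClosed_closedBall
  have hCconv : Convex ℝ C := (convex_closedBall _ _).inter (convex_closedBall _ _)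
  -- the point x0 on the segment [a, b]
  obtain ⟨t, ht⟩ : ∃ t : ℝ, t = δ / d := ⟨_, rfl⟩
  have ht0 : 0 ≤ t := ht ▸ le_of_lt (div_pos hδpos hdpos)
  have ht1 : t ≤ 1 := by rw [ht, div_le_one hdpos]; linarith
  set x0 := a + t • (b - a) with hx0
  have hab : ‖b - a‖ = d := by rw [hd, dist_eq_norm, norm_sub_rev]
  have hx0a : dist x0 a = δ := by
    rw [dist_eq_norm, show x0 - a = t • (b - a) by rw [hx0]; abel,
      norm_smul, Real.norm_of_nonneg ht0, hab, ht]
    field_simp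
  have hx0b : dist x0 b = d - δ := by
    rw [dist_eq_norm, show x0 - b = (1 - t) • (a - b) by rw [hx0]; module,
      norm_smul, Real.norm_of_nonneg (by linarith),
      show ‖a - b‖ = d from (dist_eq_norm a b) ▸ hd.symm, ht]
    field_simp
  have hx0C : x0 ∈ C :=
    ⟨mem_closedBall.2 (le_of_eq hx0a), mem_closedBall.2 (le_of_eq hx0b)⟩
  -- f maps C into C
  have hfa : f a = a := haS.2
  have hfb : f b = b := hbS.2
  have hfC : Set.MapsTo f C C := by
    intro x hx
    have hxD : x ∈ D := hCD hx
    constructor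
    · have h := hf x hxD a (hSD haS)
      rw [hfa] at h
      rw [mem_closedBall, dist_eq_norm]
      refine le_trans h ?_
      rw [← dist_eq_norm]
      exact mem_closedBall.1 hx.1
    · have h := hf x hxD b (hSD hbS)
      rw [hfb] at h
      rw [mem_closedBall, dist_eq_norm]
      refine le_trans h ?_
      rw [← dist_eq_norm]
      exact mem_closedBall.1 hx.2
  -- fixed point in the lens
  obtain ⟨z, hzC, hfz⟩ := aux_nonexpansive_fixed hCcomp hCconv ⟨x0, hx0C⟩ hfC
    (fun x hx y hy => hf x (hCD hx) y (hCD hy))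
  have hzS : z ∈ S := ⟨hCD hzC, hfz⟩
  rcases hSuv hzS with hzu | hzv
  · have h1 : d ≤ dist z b := hmin (z, b) (Set.mem_prod.2 ⟨⟨hzS, hzu⟩, hbB⟩)
    have h2 : dist z b ≤ d - δ := mem_closedBall.1 hzC.2
    linarith
  · have h1 : d ≤ dist a z := hmin (a, z) (Set.mem_prod.2 ⟨haA, ⟨hzS, hzv⟩⟩)
    have h2 : dist z a ≤ δ := mem_closedBall.1 hzC.1
    rw [dist_comm] at h1
    linarith
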